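/- arXiv:1408.3886 — 2 statements merged into one kernel-verified Lean document; each statement's English description precedes it below -/
import Mathlib

section
/- Let k ≥ 1 and let n_{-k} < n_{-k+1} < ... < n_k be integers with n_{-i} = -n_i for all i, and let Δ(T) = Σ_{i=-k}^{k} (-1)^{k+i} T^{n_i} as a Laurent polynomial over ℤ. Then Δ(T)/(1 - T^{-1}), as a formal Laurent series in T^{-1}, equals Σ_{i=0}^{∞} T^{a_i} for a strictly decreasing sequence of integers (a_i) with a_0 = n_k and a_i = -i for all i ≥ n_k. -/
open Finset
open scoped Classical

private lemma negOnePow_congr (p q : ℕ) (h : p % 2 = q % 2) : (-1:ℤ)^p = (-1:ℤ)^q := by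
  rw [← Nat.div_add_mod p 2, ← Nat.div_add_mod q 2, h]
  rw [pow_add, pow_add, pow_mul, pow_mul]
  norm_num

private lemma altsum : ∀ (N : ℕ) (c : ℕ → ℤ), (∀ j, 0 ≤ c j) → (∀ j, c j ≤ 1) →
    (∀ j, c (j+1) ≤ c j) →
    0 ≤ (∑ j ∈ Finset.range N, (-1:ℤ)^j * c j) ∧ (∑ j ∈ Finset.range N, (-1:ℤ)^j * c j) ≤ c 0
  | 0, c, h0, _, _ => by simp [h0 0]
  | (N+1), c, h0, h1, ha => by
    obtain ⟨ih0, ih1⟩ := altsum N (fun j => c (j+1)) (fun j => h0 _) (fun j => h1 _)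
      (fun j => ha _)
    rw [Finset.sum_range_succ']
    have key : ∀ j ∈ Finset.range N, (-1:ℤ)^(j+1) * c (j+1) = -((-1:ℤ)^j * c (j+1)) := by
      intro j _; ring
    rw [Finset.sum_congr rfl key, Finset.sum_neg_distrib]
    have hz : ((-1:ℤ)^(0:ℕ) * c 0) = c 0 := by norm_num
    rw [hz]
    constructor
    · have := ha 0
      linarith
    · linarith

private lemma sum_Icc_eq_range (k : ℕ) (g : ℤ → ℤ) :
    ∑ i ∈ Finset.Icc (-(k:ℤ)) (k:ℤ), g i
      = ∑ j ∈ Finset.range (2*k+1), g ((k:ℤ) - (j:ℤ)) := by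
  apply Finset.sum_nbij' (i := fun x : ℤ => ((k:ℤ) - x).toNat) (j := fun j : ℕ => (k:ℤ) - (j:ℤ))
  · intro a ha
    simp only [Finset.mem_Icc] at ha
    simp only [Finset.mem_range]
    omega
  · intro a ha
    simp only [Finset.mem_range] at ha
    simp only [Finset.mem_Icc]
    omega
  · intro a ha
    simp only [Finset.mem_Icc] at ha
    omega
  · intro a ha
    simp only [Finset.mem_range] at ha
    omega
  · intro a ha
    simp only [Finset.mem_Icc] at ha
    congr 1
    omega

theorem stmt_0 (k : ℕ) (hk : 1 ≤ k) (n : ℤ → ℤ)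
    (hmono : StrictMonoOn n (Set.Icc (-(k:ℤ)) (k:ℤ)))
    (hsym : ∀ i : ℤ, |i| ≤ (k:ℤ) → n (-i) = - n i) :
    ∃ a : ℕ → ℤ, StrictAnti a ∧ a 0 = n k ∧
      (∀ i : ℕ, n k ≤ (i:ℤ) → a i = -(i:ℤ)) ∧
      ∀ m : ℤ,
        (∑ i ∈ Finset.Icc (-(k:ℤ)) (k:ℤ), if m ≤ n i then (-1:ℤ)^((k + i).natAbs) else 0)
          = if ∃ j : ℕ, a j = m then 1 else 0 := by
  -- basic facts
  have hk0 : (0:ℤ) ∈ Set.Icc (-(k:ℤ)) (k:ℤ) := by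
    simp only [Set.mem_Icc]
    omega
  have hkk : (k:ℤ) ∈ Set.Icc (-(k:ℤ)) (k:ℤ) := by
    constructor <;> simp
  have hn0 : n 0 = 0 := by
    have := hsym 0 (by simp)
    simp at this
    linarith
  have hnkpos : 0 < n k := by
    have := hmono hk0 hkk (by exact_mod_cast hk)
    rwa [hn0] at this
  have hnegk : n (-(k:ℤ)) = -(n k) := hsym k (by simp)
  -- the summand S and the counting function F
  set S : ℤ → ℤ := fun m =>
    ∑ i ∈ Finset.Icc (-(k:ℤ)) (k:ℤ), if m ≤ n i then (-1:ℤ)^(((k:ℤ) + i).natAbs) else 0 with hS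
  set F : ℤ → ℤ := fun m =>
    ∑ i ∈ Finset.Icc (-(k:ℤ)) (k:ℤ), (-1:ℤ)^(((k:ℤ) + i).natAbs) * max (n i - m + 1) 0 with hF
  -- (F1) : F m = F (m+1) + S m
  have F1 : ∀ m : ℤ, F m = F (m+1) + S m := by
    intro m
    simp only [hF, hS, ← Finset.sum_add_distrib]
    apply Finset.sum_congr rfl
    intro i _
    rcases le_or_gt m (n i) with h | h
    · rw [if_pos h, max_eq_left (by omega), max_eq_left (by omega)]
      ring
    · rw [if_neg (by omega), max_eq_right (by omega), max_eq_right (by omega)]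
      ring
  -- (F2) : 0 ≤ S m ≤ 1
  have F2 : ∀ m : ℤ, 0 ≤ S m ∧ S m ≤ 1 := by
    intro m
    have hrw : S m = ∑ j ∈ Finset.range (2*k+1),
        (-1:ℤ)^j * (if m ≤ n ((k:ℤ) - (min j (2*k) : ℕ)) then 1 else 0) := by
      simp only [hS]
      rw [sum_Icc_eq_range k (fun i => if m ≤ n i then (-1:ℤ)^(((k:ℤ) + i).natAbs) else 0)]
      apply Finset.sum_congr rfl
      intro j hj
      simp only [Finset.mem_range] at hj
      have hmin : min j (2*k) = j := by omega
      rw [hmin]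
      have hnat : (((k:ℤ) + ((k:ℤ) - (j:ℤ))).natAbs) = 2*k - j := by omega
      rw [hnat]
      have hpow : (-1:ℤ)^(2*k - j) = (-1:ℤ)^j := by
        apply negOnePow_congr
        omega
      rw [hpow]
      rcases le_or_gt m (n ((k:ℤ) - (j:ℤ))) with h | h
      · rw [if_pos h, if_pos h]; ring
      · rw [if_neg (by omega), if_neg (by omega)]; ring
    set c : ℕ → ℤ := fun j => if m ≤ n ((k:ℤ) - (min j (2*k) : ℕ)) then 1 else 0 with hc
    have hanti : ∀ j, c (j+1) ≤ c j := by
      intro j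
      simp only [hc]
      rcases le_or_gt m (n ((k:ℤ) - (min (j+1) (2*k) : ℕ))) with h | h
      · rw [if_pos h, if_pos]
        have harg1 : ((k:ℤ) - (min (j+1) (2*k) : ℕ)) ∈ Set.Icc (-(k:ℤ)) (k:ℤ) := by
          simp only [Set.mem_Icc]
          omega
        have harg2 : ((k:ℤ) - (min j (2*k) : ℕ)) ∈ Set.Icc (-(k:ℤ)) (k:ℤ) := by
          simp only [Set.mem_Icc]
          omega
        have hle : ((k:ℤ) - (min (j+1) (2*k) : ℕ)) ≤ ((k:ℤ) - (min j (2*k) : ℕ)) := by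
          omega
        calc m ≤ n ((k:ℤ) - (min (j+1) (2*k) : ℕ)) := h
          _ ≤ n ((k:ℤ) - (min j (2*k) : ℕ)) := (hmono.monotoneOn) harg1 harg2 hle
      · rw [if_neg (by omega)]
        split <;> norm_num
    have h0 : ∀ j, 0 ≤ c j := by intro j; simp only [hc]; split <;> norm_num
    have h1 : ∀ j, c j ≤ 1 := by intro j; simp only [hc]; split <;> norm_num
    obtain ⟨hA, hB⟩ := altsum (2*k+1) c h0 h1 hanti
    rw [hrw]
    exact ⟨hA, le_trans hB (h1 0)⟩
  -- (F3) : F m = 0 for m > n k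
  have F3 : ∀ m : ℤ, n k < m → F m = 0 := by
    intro m hm
    simp only [hF]
    apply Finset.sum_eq_zero
    intro i hi
    simp only [Finset.mem_Icc] at hi
    have : n i ≤ n k := (hmono.monotoneOn) ⟨hi.1, hi.2⟩ hkk hi.2
    rw [max_eq_right (by omega)]
    ring
  -- (F4) : F (n k) = 1
  have F4 : F (n k) = 1 := by
    simp only [hF]
    rw [Finset.sum_eq_single_of_mem (k:ℤ) (by simp)]
    · have : (((k:ℤ) + (k:ℤ)).natAbs) = 2*k := by omega
      rw [this]
      have : (-1:ℤ)^(2*k) = 1 := by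
        rw [pow_mul]; norm_num
      rw [this]
      rw [max_eq_left (by omega)]
      ring
    · intro i hi hne
      simp only [Finset.mem_Icc] at hi
      have : n i < n k := hmono ⟨hi.1, hi.2⟩ hkk (lt_of_le_of_ne hi.2 hne)
      rw [max_eq_right (by omega)]
      ring
  -- sum of signs over Icc = 1
  have Lsign : ∑ i ∈ Finset.Icc (-(k:ℤ)) (k:ℤ), (-1:ℤ)^(((k:ℤ) + i).natAbs) = 1 := by
    rw [sum_Icc_eq_range k (fun i => (-1:ℤ)^(((k:ℤ) + i).natAbs))]
    have : ∀ j ∈ Finset.range (2*k+1),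
        (-1:ℤ)^(((k:ℤ) + ((k:ℤ) - (j:ℤ))).natAbs) = (-1:ℤ)^j := by
      intro j hj
      simp only [Finset.mem_range] at hj
      have hnat : (((k:ℤ) + ((k:ℤ) - (j:ℤ))).natAbs) = 2*k - j := by omega
      rw [hnat]
      apply negOnePow_congr
      omega
    rw [Finset.sum_congr rfl this, neg_one_geom_sum]
    rw [if_neg (by simp [Nat.even_add_one, parity_simps])]
  -- sum of signed n over Icc = 0
  have Lzero : ∑ i ∈ Finset.Icc (-(k:ℤ)) (k:ℤ), (-1:ℤ)^(((k:ℤ) + i).natAbs) * n i = 0 := by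
    have hneg : (∑ i ∈ Finset.Icc (-(k:ℤ)) (k:ℤ), (-1:ℤ)^(((k:ℤ) + i).natAbs) * n i)
        = ∑ i ∈ Finset.Icc (-(k:ℤ)) (k:ℤ), (-1:ℤ)^(((k:ℤ) + i).natAbs) * (- n i) := by
      apply Finset.sum_nbij' (i := fun x : ℤ => -x) (j := fun x : ℤ => -x)
      · intro a ha; simp only [Finset.mem_Icc] at ha ⊢; omega
      · intro a ha; simp only [Finset.mem_Icc] at ha ⊢; omega
      · intro a _; ring
      · intro a _; ring
      · intro a ha
        simp only [Finset.mem_Icc] at ha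
        have h1 : n (-a) = - n a := hsym a (by rw [abs_le]; exact ha)
        rw [h1, neg_neg]
        have hpar : (-1:ℤ)^(((k:ℤ) + a).natAbs) = (-1:ℤ)^(((k:ℤ) + -a).natAbs) := by
          apply negOnePow_congr
          omega
        rw [hpar]
    have h2 : (∑ i ∈ Finset.Icc (-(k:ℤ)) (k:ℤ), (-1:ℤ)^(((k:ℤ) + i).natAbs) * (- n i))
        = - ∑ i ∈ Finset.Icc (-(k:ℤ)) (k:ℤ), (-1:ℤ)^(((k:ℤ) + i).natAbs) * n i := by
      rw [← Finset.sum_neg_distrib]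
      apply Finset.sum_congr rfl
      intro i _; ring
    linarith
  -- (F5) : F m = 1 - m for m ≤ -(n k)
  have F5 : ∀ m : ℤ, m ≤ -(n k) → F m = 1 - m := by
    intro m hm
    have hall : ∀ i ∈ Finset.Icc (-(k:ℤ)) (k:ℤ), m ≤ n i := by
      intro i hi
      simp only [Finset.mem_Icc] at hi
      have : n (-(k:ℤ)) ≤ n i := (hmono.monotoneOn) ⟨le_refl _, by omega⟩ ⟨hi.1, hi.2⟩ hi.1
      rw [hnegk] at this
      omega
    have : F m = ∑ i ∈ Finset.Icc (-(k:ℤ)) (k:ℤ),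
        ((-1:ℤ)^(((k:ℤ) + i).natAbs) * n i + (1 - m) * (-1:ℤ)^(((k:ℤ) + i).natAbs)) := by
      simp only [hF]
      apply Finset.sum_congr rfl
      intro i hi
      rw [max_eq_left (by have := hall i hi; omega)]
      ring
    rw [this, Finset.sum_add_distrib, Lzero, ← Finset.mul_sum, Lsign]
    ring
  -- S (-(n k)) = 1
  have Snegnk : S (-(n k)) = 1 := by
    simp only [hS]
    have : ∀ i ∈ Finset.Icc (-(k:ℤ)) (k:ℤ),
        (if -(n k) ≤ n i then (-1:ℤ)^(((k:ℤ) + i).natAbs) else 0)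
          = (-1:ℤ)^(((k:ℤ) + i).natAbs) := by
      intro i hi
      simp only [Finset.mem_Icc] at hi
      have : n (-(k:ℤ)) ≤ n i := (hmono.monotoneOn) ⟨le_refl _, by omega⟩ ⟨hi.1, hi.2⟩ hi.1
      rw [hnegk] at this
      rw [if_pos (by omega)]
    rw [Finset.sum_congr rfl this, Lsign]
  -- F is antitone
  have Fanti : ∀ m m' : ℤ, m ≤ m' → F m' ≤ F m := by
    intro m m'
    refine Int.le_induction (motive := fun x _ => F x ≤ F m) (le_refl _) ?_ m'
    intro p hp ih
    have h1 := (F2 p).1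
    have h2 := F1 p
    omega
  -- F is nonnegative
  have Fnonneg : ∀ m : ℤ, 0 ≤ F m := by
    intro m
    rcases le_or_gt m (n k + 1) with h | h
    · have := Fanti m (n k + 1) h
      rw [F3 (n k + 1) (by omega)] at this
      omega
    · rw [F3 m (by omega)]
  -- construct a
  have hex : ∀ j : ℕ, ∃ ub : ℤ, ((j:ℤ) + 1 ≤ F ub) ∧ ∀ z : ℤ, ((j:ℤ) + 1 ≤ F z) → z ≤ ub := by
    intro j
    apply Int.exists_greatest_of_bdd
    · refine ⟨n k, fun z hz => ?_⟩
      by_contra hc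
      push_neg at hc
      rw [F3 z hc] at hz
      omega
    · refine ⟨-(j:ℤ) - n k, ?_⟩
      rw [F5 _ (by omega)]
      omega
  choose a ha1 ha2 using hex
  -- F (a j) = j + 1 and F (a j + 1) = j
  have hFa1 : ∀ j : ℕ, F (a j + 1) = (j:ℤ) := by
    intro j
    have hlt : ¬ ((j:ℤ) + 1 ≤ F (a j + 1)) := by
      intro h
      have := ha2 j _ h
      omega
    have h2 := F1 (a j)
    have h3 := (F2 (a j)).2
    have h4 := ha1 j
    omega
  have hFa : ∀ j : ℕ, F (a j) = (j:ℤ) + 1 := by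
    intro j
    have h2 := F1 (a j)
    have h3 := (F2 (a j)).2
    have h4 := ha1 j
    have h5 := hFa1 j
    omega
  refine ⟨a, ?_, ?_, ?_, ?_⟩
  · -- StrictAnti
    apply strictAnti_nat_of_succ_lt
    intro j
    by_contra hc
    push_neg at hc
    have := Fanti (a j) (a (j+1)) hc
    rw [hFa j, hFa (j+1)] at this
    push_cast at this
    omega
  · -- a 0 = n k
    have h1 : a 0 ≤ n k := by
      by_contra hc
      push_neg at hc
      have := hFa 0
      rw [F3 _ hc] at this
      omega
    have h2 : n k ≤ a 0 := by
      apply ha2 0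
      rw [F4]
      norm_num
    omega
  · -- a i = -i for i ≥ n k
    intro i hi
    have h1 : -(i:ℤ) ≤ a i := by
      apply ha2 i
      rw [F5 _ (by omega)]
      omega
    have h2 : a i ≤ -(i:ℤ) := by
      by_contra hc
      push_neg at hc
      have hle : 1 - (i:ℤ) ≤ a i := by omega
      have hF1 : F (a i) ≤ F (1 - (i:ℤ)) := Fanti _ _ hle
      have hF2 : F (1 - (i:ℤ)) ≤ (i:ℤ) := by
        rcases lt_or_ge ((n k):ℤ) (i:ℤ) with h | h
        · rw [F5 _ (by omega)]
          omega
        · -- i = n k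
          have hik : (i:ℤ) = n k := le_antisymm h hi
          have hstep := F1 (-(n k))
          rw [F5 _ (le_refl _), Snegnk] at hstep
          have : F (-(n k) + 1) = n k := by omega
          rw [hik]
          have harg : (1 : ℤ) - n k = -(n k) + 1 := by ring
          rw [harg, this]
      rw [hFa i] at hF1
      omega
    omega
  · -- the main identity
    intro m
    have hgoal : S m = if ∃ j : ℕ, a j = m then 1 else 0 := by
      by_cases hex2 : ∃ j : ℕ, a j = m
      · rw [if_pos hex2]
        obtain ⟨j, hj⟩ := hex2
        have h1 := F1 m
        have e1 : F m = (j:ℤ) + 1 := by rw [← hj]; exact hFa j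
        have e2 : F (m + 1) = (j:ℤ) := by rw [← hj]; exact hFa1 j
        omega
      · rw [if_neg hex2]
        by_contra hc
        have h1 := (F2 m).1
        have h2 := (F2 m).2
        have hSm : S m = 1 := by omega
        have hFm := F1 m
        set j : ℕ := (F (m+1)).toNat with hj
        have hjval : (j:ℤ) = F (m+1) := Int.toNat_of_nonneg (Fnonneg (m+1))
        apply hex2
        refine ⟨j, ?_⟩
        have hP : (j:ℤ) + 1 ≤ F m := by omega
        have hub : ∀ z : ℤ, ((j:ℤ) + 1 ≤ F z) → z ≤ m := by
          intro z hz
          by_contra hcz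
          push_neg at hcz
          have := Fanti (m+1) z (by omega)
          omega
        have hle1 : a j ≤ m := hub _ (ha1 j)
        have hle2 : m ≤ a j := ha2 j m hP
        omega
    exact hgoal
end

section
/- Let g ≥ 1 and let (a_i)_{i≥0} be a strictly decreasing sequence of integers with a_0 = g and a_i = -i for all i ≥ g. Then the condition 'a_i ≤ g - 2i for all 0 ≤ i ≤ g' is equivalent to the condition on the gap sequence: writing the associated symmetric exponent sequence n_{-k} < ... < n_k (recovered from Σ T^{a_i} = Δ(T)/(1-T^{-1})) with gaps r_i = n_{k+2-2i} - n_{k+1-2i}, one has r_1 = 1 and Σ_{i=2}^j r_i ≤ Σ_{i=k-j+2}^k r_i for all j ≤ k. -/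
open Finset
open scoped Classical

lemma aux_sum_range_two_mul {M : Type*} [AddCommMonoid M] (F : ℕ → M) (k : ℕ) :
    ∑ m ∈ range (2*k), F m = ∑ j ∈ range k, (F (2*j) + F (2*j+1)) := by
  induction k with
  | zero => simp
  | succ k ih =>
      have h2 : 2*(k+1) = (2*k+1)+1 := by ring
      rw [h2, Finset.sum_range_succ, Finset.sum_range_succ, ih, Finset.sum_range_succ]
      abel

lemma aux_neg_one_pow_sub (k m : ℕ) (hm : m ≤ 2*k) : (-1:ℤ)^(2*k-m) = (-1:ℤ)^m := by
  rcases Nat.even_or_odd m with h|h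
  · have h' : Even (2*k - m) := by obtain ⟨r, rfl⟩ := h; exact ⟨k - r, by omega⟩
    rw [h.neg_one_pow, h'.neg_one_pow]
  · have h' : Odd (2*k - m) := by obtain ⟨r, rfl⟩ := h; exact ⟨k - r - 1, by omega⟩
    rw [h.neg_one_pow, h'.neg_one_pow]

noncomputable def Gf (k : ℕ) (n : ℤ → ℤ) (c : ℤ) : ℤ :=
  ∑ i ∈ Finset.Icc (-(k:ℤ)) (k:ℤ), (-1:ℤ)^((k + i).natAbs) * max (n i - c) 0

lemma Gf_pair (k : ℕ) (n : ℤ → ℤ) (c : ℤ) :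
    Gf k n c = max (n (-(k:ℤ)) - c) 0
      + ∑ j ∈ range k, (max (n ((k:ℤ)-2*j) - c) 0 - max (n ((k:ℤ)-2*j-1) - c) 0) := by
  have h1 : Gf k n c = ∑ m ∈ range (2*k+1), (-1:ℤ)^m * max (n ((k:ℤ) - m) - c) 0 := by
    rw [Gf]
    refine Finset.sum_nbij' (fun x => ((k:ℤ) - x).toNat) (fun m => (k:ℤ) - m)
      ?_ ?_ ?_ ?_ ?_
    · intro x hx; simp only [Finset.mem_Icc] at hx; simp only [Finset.mem_range]; omega
    · intro m hm; simp only [Finset.mem_range] at hm; simp only [Finset.mem_Icc]; omega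
    · intro x hx; simp only [Finset.mem_Icc] at hx; omega
    · intro m hm; simp only [Finset.mem_range] at hm; omega
    · intro x hx; simp only [Finset.mem_Icc] at hx
      have harg : (k:ℤ) - (((k:ℤ) - x).toNat : ℤ) = x := by omega
      rw [harg]
      have hs : ((k:ℤ) + x).natAbs = 2*k - ((k:ℤ) - x).toNat := by omega
      rw [hs, aux_neg_one_pow_sub k _ (by omega)]
  rw [h1, Finset.sum_range_succ, aux_sum_range_two_mul (fun m => (-1:ℤ)^m * max (n ((k:ℤ) - m) - c) 0) k]
  have h2 : ((2*k : ℕ) : ℤ) = 2*(k:ℤ) := by push_cast; ring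
  have h3 : (k:ℤ) - 2*(k:ℤ) = -(k:ℤ) := by ring
  have h4 : (-1:ℤ)^(2*k) = 1 := by rw [pow_mul]; norm_num
  rw [h2, h3, h4, one_mul, add_comm]
  congr 1
  apply Finset.sum_congr rfl
  intro j hj
  have e1 : ((2*j : ℕ) : ℤ) = 2*(j:ℤ) := by push_cast; ring
  have e2 : ((2*j+1 : ℕ) : ℤ) = 2*(j:ℤ)+1 := by push_cast; ring
  have p1 : (-1:ℤ)^(2*j) = 1 := by rw [pow_mul]; norm_num
  have p2 : (-1:ℤ)^(2*j+1) = -1 := by rw [pow_succ, p1]; ring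
  rw [e1, e2, p1, p2]
  have e3 : (k:ℤ) - (2*(j:ℤ)+1) = (k:ℤ) - 2*(j:ℤ) - 1 := by ring
  rw [e3]; ring

section
variable {g k : ℕ} {n : ℤ → ℤ}

lemma aux_findGreatest (Q : ℕ → Prop) (N : ℕ) (h0 : Q 0) :
    ∃ j0 : ℕ, j0 ≤ N ∧ Q j0 ∧ ∀ jj : ℕ, jj ≤ N → j0 < jj → ¬ Q jj := by
  classical
  exact ⟨Nat.findGreatest Q N, Nat.findGreatest_le _, Nat.findGreatest_spec (Nat.zero_le _) h0,
    fun jj h1 h2 => Nat.findGreatest_is_greatest h2 h1⟩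

lemma nle (hmono : StrictMonoOn n (Set.Icc (-(k:ℤ)) (k:ℤ))) {x y : ℤ}
    (hx : -(k:ℤ) ≤ x) (hy : y ≤ (k:ℤ)) (hxy : x ≤ y) : n x ≤ n y :=
  hmono.monotoneOn ⟨hx, hxy.trans hy⟩ ⟨hx.trans hxy, hy⟩ hxy

lemma Gf_interval (hmono : StrictMonoOn n (Set.Icc (-(k:ℤ)) (k:ℤ)))
    (j0 : ℕ) (hj0 : j0 < k) (c : ℤ)
    (hlo : n ((k:ℤ)-2*j0-1) ≤ c) (hhi : c ≤ n ((k:ℤ)-2*j0)) :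
    Gf k n c = (∑ j ∈ range j0, (n ((k:ℤ)-2*j) - n ((k:ℤ)-2*j-1))) + (n ((k:ℤ)-2*j0) - c) := by
  rw [Gf_pair]
  have hbot : n (-(k:ℤ)) ≤ c :=
    le_trans (nle hmono (by omega) (by omega) (by omega)) hlo
  rw [max_eq_right (by omega)]
  rw [← Finset.sum_range_add_sum_Ico _ (Nat.succ_le_of_lt hj0), Finset.sum_range_succ]
  have hz : ∑ j ∈ Ico (j0+1) k, (max (n ((k:ℤ)-2*j) - c) 0 - max (n ((k:ℤ)-2*j-1) - c) 0) = 0 := by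
    apply Finset.sum_eq_zero
    intro j hj
    simp only [Finset.mem_Ico] at hj
    have h1 : n ((k:ℤ)-2*j) ≤ c :=
      le_trans (le_trans (nle hmono (by omega) (by omega) (by omega)) hlo) (le_refl c)
    have h2 : n ((k:ℤ)-2*j-1) ≤ c :=
      le_trans (nle hmono (by omega) (by omega) (by omega)) hlo
    rw [max_eq_right (by omega), max_eq_right (by omega)]
    ring
  rw [hz]
  have hmain : ∑ j ∈ range j0, (max (n ((k:ℤ)-2*j) - c) 0 - max (n ((k:ℤ)-2*j-1) - c) 0)
      = ∑ j ∈ range j0, (n ((k:ℤ)-2*j) - n ((k:ℤ)-2*j-1)) := by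
    apply Finset.sum_congr rfl
    intro j hj
    simp only [Finset.mem_range] at hj
    have h1 : c ≤ n ((k:ℤ)-2*j-1) :=
      le_trans hhi (nle hmono (by omega) (by omega) (by omega))
    have h2 : c ≤ n ((k:ℤ)-2*j) :=
      le_trans hhi (nle hmono (by omega) (by omega) (by omega))
    rw [max_eq_left (by omega), max_eq_left (by omega)]
    ring
  rw [hmain]
  rw [max_eq_left (by omega), max_eq_right (by omega)]
  ring

lemma Gf_gap (hmono : StrictMonoOn n (Set.Icc (-(k:ℤ)) (k:ℤ)))
    (j0 : ℕ) (hj0 : j0 < k) (c : ℤ)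
    (hlo : n ((k:ℤ)-2*j0-2) ≤ c) (hhi : c ≤ n ((k:ℤ)-2*j0-1)) :
    Gf k n c = ∑ j ∈ range (j0+1), (n ((k:ℤ)-2*j) - n ((k:ℤ)-2*j-1)) := by
  rw [Gf_pair]
  have hbot : n (-(k:ℤ)) ≤ c :=
    le_trans (nle hmono (by omega) (by omega) (by omega)) hlo
  rw [max_eq_right (by omega)]
  rw [← Finset.sum_range_add_sum_Ico _ (Nat.succ_le_of_lt hj0)]
  have hz : ∑ j ∈ Ico (j0+1) k, (max (n ((k:ℤ)-2*j) - c) 0 - max (n ((k:ℤ)-2*j-1) - c) 0) = 0 := by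
    apply Finset.sum_eq_zero
    intro j hj
    simp only [Finset.mem_Ico] at hj
    have h1 : n ((k:ℤ)-2*j) ≤ c :=
      le_trans (nle hmono (by omega) (by omega) (by omega)) hlo
    have h2 : n ((k:ℤ)-2*j-1) ≤ c :=
      le_trans (nle hmono (by omega) (by omega) (by omega)) hlo
    rw [max_eq_right (by omega), max_eq_right (by omega)]
    ring
  rw [hz, add_zero, zero_add]
  apply Finset.sum_congr rfl
  intro j hj
  simp only [Finset.mem_range] at hj
  have h1 : c ≤ n ((k:ℤ)-2*j-1) :=
    le_trans hhi (nle hmono (by omega) (by omega) (by omega))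
  have h2 : c ≤ n ((k:ℤ)-2*j) :=
    le_trans hhi (nle hmono (by omega) (by omega) (by omega))
  rw [max_eq_left (by omega), max_eq_left (by omega)]
  ring

lemma tele (hnk : n (k:ℤ) = (g:ℤ)) (j0 : ℕ) :
    (∑ j ∈ range (j0+1), (n ((k:ℤ)-2*j) - n ((k:ℤ)-2*j-1)))
      + (∑ j ∈ range j0, (n ((k:ℤ)-2*j-1) - n ((k:ℤ)-2*j-2)))
    = (g:ℤ) - n ((k:ℤ)-2*j0-1) := by
  have h := Finset.sum_range_sub' (fun m : ℕ => n ((k:ℤ) - m)) (2*j0+1)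
  rw [Finset.sum_range_succ, aux_sum_range_two_mul
    (fun m : ℕ => n ((k:ℤ) - m) - n ((k:ℤ) - (m+1:ℕ))) j0] at h
  have e : ∀ j ∈ range j0,
      (n ((k:ℤ) - (2*j:ℕ)) - n ((k:ℤ) - (2*j+1:ℕ))) + (n ((k:ℤ) - (2*j+1:ℕ)) - n ((k:ℤ) - (2*j+1+1:ℕ)))
      = (n ((k:ℤ)-2*j) - n ((k:ℤ)-2*j-1)) + (n ((k:ℤ)-2*j-1) - n ((k:ℤ)-2*j-2)) := by
    intro j hj
    rw [show ((k:ℤ) - (2*j:ℕ)) = (k:ℤ)-2*j by push_cast; ring,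
        show ((k:ℤ) - (2*j+1:ℕ)) = (k:ℤ)-2*j-1 by push_cast; ring,
        show ((k:ℤ) - (2*j+1+1:ℕ)) = (k:ℤ)-2*j-2 by push_cast; ring]
  rw [Finset.sum_congr rfl e] at h
  rw [Finset.sum_add_distrib] at h
  rw [show ((k:ℤ) - (2*j0:ℕ)) = (k:ℤ)-2*j0 by push_cast; ring,
      show ((k:ℤ) - (2*j0+1:ℕ)) = (k:ℤ)-2*j0-1 by push_cast; ring,
      show ((k:ℤ) - (0:ℕ)) = (k:ℤ) by push_cast; ring, hnk] at h
  rw [Finset.sum_range_succ]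
  linarith

lemma S1eq (j0 : ℕ) :
    ∑ i ∈ Icc 2 (j0+1), (n ((k:ℤ)+2-2*(i:ℤ)) - n ((k:ℤ)+1-2*(i:ℤ)))
    = (∑ j ∈ range (j0+1), (n ((k:ℤ)-2*j) - n ((k:ℤ)-2*j-1))) - (n (k:ℤ) - n ((k:ℤ)-1)) := by
  induction j0 with
  | zero =>
      rw [show Finset.Icc 2 1 = (∅ : Finset ℕ) from Finset.Icc_eq_empty (by omega)]
      simp
  | succ j0 ih =>
      rw [Finset.sum_Icc_succ_top (by omega), ih, Finset.sum_range_succ (fun j : ℕ => n ((k:ℤ)-2*j) - n ((k:ℤ)-2*j-1)) (j0+1)]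
      rw [show ((j0+1+1:ℕ):ℤ) = (j0:ℤ)+2 by push_cast; ring,
          show ((j0+1:ℕ):ℤ) = (j0:ℤ)+1 by push_cast; ring,
          show (k:ℤ)+2-2*((j0:ℤ)+2) = (k:ℤ)-2*((j0:ℤ)+1) by ring,
          show (k:ℤ)+1-2*((j0:ℤ)+2) = (k:ℤ)-2*((j0:ℤ)+1)-1 by ring]
      ring

lemma S2eq (hsym : ∀ i : ℤ, |i| ≤ (k:ℤ) → n (-i) = - n i) (j0 : ℕ) (hj0 : j0 < k) :
    ∑ i ∈ Icc (k-j0+1) k, (n ((k:ℤ)+2-2*(i:ℤ)) - n ((k:ℤ)+1-2*(i:ℤ)))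
    = ∑ j ∈ range j0, (n ((k:ℤ)-2*j-1) - n ((k:ℤ)-2*j-2)) := by
  rw [← Finset.Ico_add_one_right_eq_Icc, Finset.sum_Ico_eq_sum_range]
  rw [show k+1-(k-j0+1) = j0 by omega]
  rw [← Finset.sum_range_reflect (fun j : ℕ => n ((k:ℤ)-2*j-1) - n ((k:ℤ)-2*j-2)) j0]
  apply Finset.sum_congr rfl
  intro i hi
  simp only [Finset.mem_range] at hi
  have e1 : ((k-j0+1+i : ℕ) : ℤ) = (k:ℤ)-(j0:ℤ)+1+(i:ℤ) := by omega
  have e2 : ((j0-1-i : ℕ) : ℤ) = (j0:ℤ)-1-(i:ℤ) := by omega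
  rw [e1, e2]
  have habs1 : |(k:ℤ)-2*(j0:ℤ)+2*(i:ℤ)| ≤ (k:ℤ) := by rw [abs_le]; omega
  have habs2 : |(k:ℤ)-2*(j0:ℤ)+2*(i:ℤ)+1| ≤ (k:ℤ) := by rw [abs_le]; omega
  have s1 := hsym _ habs1
  have s2 := hsym _ habs2
  rw [show (k:ℤ)+2-2*((k:ℤ)-(j0:ℤ)+1+(i:ℤ)) = -((k:ℤ)-2*(j0:ℤ)+2*(i:ℤ)) by ring,
      show (k:ℤ)+1-2*((k:ℤ)-(j0:ℤ)+1+(i:ℤ)) = -((k:ℤ)-2*(j0:ℤ)+2*(i:ℤ)+1) by ring,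
      s1, s2,
      show (k:ℤ)-2*((j0:ℤ)-1-(i:ℤ))-1 = (k:ℤ)-2*(j0:ℤ)+2*(i:ℤ)+1 by ring,
      show (k:ℤ)-2*((j0:ℤ)-1-(i:ℤ))-2 = (k:ℤ)-2*(j0:ℤ)+2*(i:ℤ) by ring]
  ring

lemma Gf_lb (hmono : StrictMonoOn n (Set.Icc (-(k:ℤ)) (k:ℤ))) (hk : 1 ≤ k) (c : ℤ) :
    max (n (k:ℤ) - c) 0 - max (n ((k:ℤ)-1) - c) 0 ≤ Gf k n c := by
  rw [Gf_pair]
  rw [Finset.range_eq_Ico, Finset.sum_eq_sum_Ico_succ_bot (by omega : 0 < k)]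
  have hrest : (0:ℤ) ≤ ∑ j ∈ Ico (0+1) k, (max (n ((k:ℤ)-2*j) - c) 0 - max (n ((k:ℤ)-2*j-1) - c) 0) := by
    apply Finset.sum_nonneg
    intro j hj
    simp only [Finset.mem_Ico] at hj
    have h1 : n ((k:ℤ)-2*j-1) ≤ n ((k:ℤ)-2*j) := nle hmono (by omega) (by omega) (by omega)
    have h2 : max (n ((k:ℤ)-2*j-1) - c) 0 ≤ max (n ((k:ℤ)-2*j) - c) 0 :=
      max_le_max (by omega) le_rfl
    omega
  have hlone : (0:ℤ) ≤ max (n (-(k:ℤ)) - c) 0 := le_max_right _ _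
  rw [show (k:ℤ)-2*((0:ℕ):ℤ) = (k:ℤ) by push_cast; ring]
  linarith

lemma Gf_top (hmono : StrictMonoOn n (Set.Icc (-(k:ℤ)) (k:ℤ))) (hnk : n (k:ℤ) = (g:ℤ)) :
    Gf k n (g:ℤ) = 0 := by
  rw [Gf]
  apply Finset.sum_eq_zero
  intro i hi
  simp only [Finset.mem_Icc] at hi
  have h := nle hmono (x := i) (y := (k:ℤ)) hi.1 le_rfl hi.2
  rw [hnk] at h
  rw [max_eq_right (by omega), mul_zero]

lemma trans1 (hmono : StrictMonoOn n (Set.Icc (-(k:ℤ)) (k:ℤ)))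
    (hsym : ∀ i : ℤ, |i| ≤ (k:ℤ) → n (-i) = - n i) (hnk : n (k:ℤ) = (g:ℤ))
    (hr1 : n (k:ℤ) - n ((k:ℤ)-1) = 1) (j0 : ℕ) (hj0 : j0 < k) :
    ((∑ i ∈ Icc 2 (j0+1), (n ((k:ℤ)+2-2*(i:ℤ)) - n ((k:ℤ)+1-2*(i:ℤ))))
      ≤ ∑ i ∈ Icc (k-(j0+1)+2) k, (n ((k:ℤ)+2-2*(i:ℤ)) - n ((k:ℤ)+1-2*(i:ℤ))))
    ↔ 2 * Gf k n (n ((k:ℤ)-2*(j0:ℤ)-1)) ≤ (g:ℤ) - n ((k:ℤ)-2*(j0:ℤ)-1) + 1 := by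
  rw [show k-(j0+1)+2 = k-j0+1 by omega, S1eq j0, S2eq hsym j0 hj0]
  have hGB : Gf k n (n ((k:ℤ)-2*(j0:ℤ)-1)) = ∑ j ∈ range (j0+1), (n ((k:ℤ)-2*(j:ℤ)) - n ((k:ℤ)-2*(j:ℤ)-1)) :=
    Gf_gap hmono j0 hj0 _ (nle hmono (by omega) (by omega) (by omega)) le_rfl
  have ht := tele hnk j0
  rw [hGB, hr1]
  constructor <;> intro h <;> linarith

lemma core (hmono : StrictMonoOn n (Set.Icc (-(k:ℤ)) (k:ℤ)))
    (hsym : ∀ i : ℤ, |i| ≤ (k:ℤ) → n (-i) = - n i) (hnk : n (k:ℤ) = (g:ℤ))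
    (hg : 1 ≤ g) (hk : 1 ≤ k)
    (hstep : ∀ c : ℤ, Gf k n (c-1) ≤ Gf k n c + 1)
    (hGtop : Gf k n (g:ℤ) = 0) :
    (∀ i : ℕ, i ≤ g → Gf k n ((g:ℤ) - 2*(i:ℤ)) ≤ (i:ℤ)) ↔
      ((n (k:ℤ) - n ((k:ℤ)-1) = 1) ∧
        ∀ j0 : ℕ, j0 < k → 2 * Gf k n (n ((k:ℤ)-2*(j0:ℤ)-1)) ≤ (g:ℤ) - n ((k:ℤ)-2*(j0:ℤ)-1) + 1) := by
  constructor
  · intro hG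
    have hB0 : n ((k:ℤ)-1) = (g:ℤ)-1 := by
      have hlt : n ((k:ℤ)-1) < n (k:ℤ) :=
        hmono (Set.mem_Icc.mpr ⟨by omega, by omega⟩) (Set.mem_Icc.mpr ⟨by omega, by omega⟩) (by omega)
      by_contra hne
      have hle : n ((k:ℤ)-1) ≤ (g:ℤ)-2 := by omega
      have h1 := Gf_lb hmono hk ((g:ℤ)-2)
      rw [hnk, max_eq_left (by omega), max_eq_right (by omega)] at h1
      have h2 := hG 1 hg
      rw [show (g:ℤ)-2*((1:ℕ):ℤ) = (g:ℤ)-2 by push_cast; ring] at h2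
      omega
    refine ⟨by omega, ?_⟩
    intro j0 hj0
    have hc1 : n ((k:ℤ)-2*(j0:ℤ)-1) ≤ (g:ℤ)-1 := by
      have h := nle hmono (x := (k:ℤ)-2*(j0:ℤ)-1) (y := (k:ℤ)-1) (by omega) (by omega) (by omega)
      omega
    have hsymK1 := hsym ((k:ℤ)-1) (by rw [abs_le]; omega)
    have hc2 : -(g:ℤ)+1 ≤ n ((k:ℤ)-2*(j0:ℤ)-1) := by
      have h3 : n (-((k:ℤ)-1)) ≤ n ((k:ℤ)-2*(j0:ℤ)-1) := nle hmono (by omega) (by omega) (by omega)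
      rw [hsymK1] at h3
      omega
    set c := n ((k:ℤ)-2*(j0:ℤ)-1) with hc
    rcases Int.even_or_odd ((g:ℤ) - c) with ⟨m,hm⟩|⟨m,hm⟩
    · have h2 := hG m.toNat (by omega)
      rw [show (g:ℤ)-2*((m.toNat:ℕ):ℤ) = c by omega] at h2
      omega
    · have h2 := hG m.toNat (by omega)
      rw [show (g:ℤ)-2*((m.toNat:ℕ):ℤ) = c+1 by omega] at h2
      have h3 := hstep (c+1)
      rw [add_sub_cancel_right] at h3
      omega
  · rintro ⟨hr1, hP⟩
    have hB0 : n ((k:ℤ)-1) = (g:ℤ)-1 := by omega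
    intro i hi
    rcases Nat.eq_zero_or_pos i with rfl|hipos
    · rw [show (g:ℤ)-2*((0:ℕ):ℤ) = (g:ℤ) by push_cast; ring, hGtop]
      simp
    · set c := (g:ℤ) - 2*(i:ℤ) with hcdef
      have hcg : c ≤ (g:ℤ)-2 := by omega
      have hclo : -(g:ℤ) ≤ c := by omega
      have hP0 : c < n ((k:ℤ)-2*((0:ℕ):ℤ)) := by
        rw [show (k:ℤ)-2*((0:ℕ):ℤ) = (k:ℤ) by push_cast; ring, hnk]
        omega
      obtain ⟨j0, hj0le, hspec0, hmax0⟩ :=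
        aux_findGreatest (fun j : ℕ => c < n ((k:ℤ)-2*(j:ℤ))) (k-1) hP0
      have hspec : c < n ((k:ℤ)-2*(j0:ℤ)) := hspec0
      have hmax : ∀ jj : ℕ, jj ≤ k-1 → j0 < jj → ¬ (c < n ((k:ℤ)-2*(jj:ℤ))) := hmax0
      have hj0k : j0 < k := by omega
      by_cases hcase : n ((k:ℤ)-2*(j0:ℤ)-1) ≤ c
      · have hGc := Gf_interval hmono j0 hj0k c hcase (le_of_lt hspec)
        have hBT : n ((k:ℤ)-2*(j0:ℤ)-1) ≤ n ((k:ℤ)-2*(j0:ℤ)) := nle hmono (by omega) (by omega) (by omega)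
        have hGB := Gf_interval hmono j0 hj0k (n ((k:ℤ)-2*(j0:ℤ)-1)) le_rfl hBT
        have hp := hP j0 hj0k
        omega
      · push_neg at hcase
        have hlo : n ((k:ℤ)-2*(j0:ℤ)-2) ≤ c := by
          rcases Nat.lt_or_ge j0 (k-1) with hlt|hge
          · have hng := hmax (j0+1) (by omega) (by omega)
            push_neg at hng
            rw [show (k:ℤ)-2*((j0+1:ℕ):ℤ) = (k:ℤ)-2*(j0:ℤ)-2 by push_cast; ring] at hng
            exact hng
          · have hj0e : (j0:ℤ) = (k:ℤ)-1 := by omega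
            have hsymK := hsym (k:ℤ) (by rw [abs_le]; omega)
            rw [show (k:ℤ)-2*(j0:ℤ)-2 = -(k:ℤ) by omega, hsymK, hnk]
            omega
        have hGc := Gf_gap hmono j0 hj0k c hlo (le_of_lt hcase)
        have hGB := Gf_gap hmono j0 hj0k (n ((k:ℤ)-2*(j0:ℤ)-1))
          (nle hmono (by omega) (by omega) (by omega)) le_rfl
        have hp := hP j0 hj0k
        omega

end

theorem stmt_4 (g k : ℕ) (hg : 1 ≤ g) (hk : 1 ≤ k) (n : ℤ → ℤ) (a : ℕ → ℤ)
    (hmono : StrictMonoOn n (Set.Icc (-(k:ℤ)) (k:ℤ)))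
    (hsym : ∀ i : ℤ, |i| ≤ (k:ℤ) → n (-i) = - n i)
    (hnk : n k = g)
    (ha : StrictAnti a) (ha0 : a 0 = g)
    (hatail : ∀ i : ℕ, g ≤ i → a i = -(i:ℤ))
    (hlink : ∀ m : ℤ,
      (∑ i ∈ Finset.Icc (-(k:ℤ)) (k:ℤ), if m ≤ n i then (-1:ℤ)^((k + i).natAbs) else 0)
        = if ∃ j : ℕ, a j = m then 1 else 0) :
    (∀ i : ℕ, i ≤ g → a i ≤ (g:ℤ) - 2*(i:ℤ)) ↔
      (n (k:ℤ) - n ((k:ℤ) - 1) = 1 ∧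
        ∀ j : ℕ, j ≤ k →
          (∑ i ∈ Finset.Icc 2 j, (n ((k:ℤ)+2-2*(i:ℤ)) - n ((k:ℤ)+1-2*(i:ℤ))))
            ≤ ∑ i ∈ Finset.Icc (k - j + 2) k, (n ((k:ℤ)+2-2*(i:ℤ)) - n ((k:ℤ)+1-2*(i:ℤ)))) := by
  -- Step A : relate a to Gf
  have hGstep : ∀ c : ℤ, Gf k n (c-1) = Gf k n c + (if ∃ j : ℕ, a j = c then (1:ℤ) else 0) := by
    intro c
    have h1 : Gf k n (c-1) - Gf k n c
        = ∑ i ∈ Finset.Icc (-(k:ℤ)) (k:ℤ), (if c ≤ n i then (-1:ℤ)^((k+i).natAbs) else 0) := by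
      rw [Gf, Gf, ← Finset.sum_sub_distrib]
      apply Finset.sum_congr rfl
      intro i hi
      rcases le_or_gt c (n i) with h|h
      · rw [if_pos h, max_eq_left (by omega), max_eq_left (by omega)]; ring
      · rw [if_neg (not_le.mpr h), max_eq_right (by omega), max_eq_right (by omega)]; ring
    rw [hlink c] at h1
    linarith
  have hstep : ∀ c : ℤ, Gf k n (c-1) ≤ Gf k n c + 1 := by
    intro c
    have h := hGstep c
    split at h <;> omega
  have hGtop : Gf k n (g:ℤ) = 0 := Gf_top hmono hnk
  have hsum : ∀ d : ℕ, Gf k n ((g:ℤ) - d)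
      = ∑ m ∈ Finset.Icc ((g:ℤ)-d+1) (g:ℤ), (if ∃ j : ℕ, a j = m then (1:ℤ) else 0) := by
    intro d
    induction d with
    | zero =>
        simp only [Nat.cast_zero, sub_zero, hGtop]
        rw [Finset.Icc_eq_empty (by omega), Finset.sum_empty]
    | succ d ih =>
        rw [show (g:ℤ) - ((d+1:ℕ):ℤ) = ((g:ℤ) - (d:ℤ)) - 1 by push_cast; ring]
        rw [hGstep ((g:ℤ)-(d:ℤ)), ih]
        rw [show (g:ℤ) - (d:ℤ) - 1 + 1 = (g:ℤ) - (d:ℤ) by ring]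
        have hins : Finset.Icc ((g:ℤ)-(d:ℤ)) (g:ℤ) = insert ((g:ℤ)-(d:ℤ)) (Finset.Icc ((g:ℤ)-(d:ℤ)+1) (g:ℤ)) := by
          ext x
          simp only [Finset.mem_Icc, Finset.mem_insert]
          omega
        rw [hins, Finset.sum_insert (by simp only [Finset.mem_Icc]; omega)]
        ring
  have hex : ∀ c : ℤ, ∃ j : ℕ, a j ≤ c := by
    intro c
    refine ⟨g + (-c).toNat, ?_⟩
    rw [hatail _ (by omega)]
    push_cast
    omega
  have A6 : ∀ (c : ℤ) (i : ℕ), a i ≤ c ↔ Nat.find (hex c) ≤ i := by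
    intro c i
    constructor
    · exact fun h => Nat.find_le h
    · intro h
      exact le_trans (ha.antitone h) (Nat.find_spec (hex c))
  have A7 : ∀ c : ℤ, (∑ m ∈ Finset.Icc (c+1) (g:ℤ), (if ∃ j : ℕ, a j = m then (1:ℤ) else 0))
      = ((Nat.find (hex c) : ℕ) : ℤ) := by
    intro c
    have himg : Finset.filter (fun m => ∃ j : ℕ, a j = m) (Finset.Icc (c+1) (g:ℤ))
        = Finset.image a (Finset.range (Nat.find (hex c))) := by
      ext m
      simp only [Finset.mem_filter, Finset.mem_Icc, Finset.mem_image, Finset.mem_range]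
      constructor
      · rintro ⟨⟨h1, h2⟩, j, rfl⟩
        refine ⟨j, ?_, rfl⟩
        by_contra hj
        push_neg at hj
        have := ha.antitone hj
        have h3 := Nat.find_spec (hex c)
        omega
      · rintro ⟨j, hj, rfl⟩
        have h1 := Nat.find_min (hex c) hj
        have h2 : a j ≤ a 0 := ha.antitone (Nat.zero_le j)
        exact ⟨⟨by omega, by omega⟩, j, rfl⟩
    rw [Finset.sum_boole, himg, Finset.card_image_of_injOn (Function.Injective.injOn ha.injective),
        Finset.card_range]
  have master : ∀ (c : ℤ) (i : ℕ), c ≤ (g:ℤ) → (a i ≤ c ↔ Gf k n c ≤ (i:ℤ)) := by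
    intro c i hc
    have hd : (g:ℤ) - (((g - c).toNat : ℕ) : ℤ) = c := by omega
    have h1 : Gf k n c = ((Nat.find (hex c) : ℕ) : ℤ) := by
      conv_lhs => rw [← hd]
      rw [hsum]
      rw [show (g:ℤ) - (((g - c).toNat : ℕ) : ℤ) + 1 = c + 1 by omega]
      exact A7 c
    rw [A6 c i, h1]
    exact Nat.cast_le.symm
  have hL : (∀ i : ℕ, i ≤ g → a i ≤ (g:ℤ) - 2*(i:ℤ))
      ↔ (∀ i : ℕ, i ≤ g → Gf k n ((g:ℤ) - 2*(i:ℤ)) ≤ (i:ℤ)) := by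
    constructor
    · intro h i hi
      exact (master _ i (by omega)).mp (h i hi)
    · intro h i hi
      exact (master _ i (by omega)).mpr (h i hi)
  rw [hL, core hmono hsym hnk hg hk hstep hGtop]
  constructor
  · rintro ⟨hr1, hP⟩
    refine ⟨hr1, ?_⟩
    intro j hj
    match j with
    | 0 =>
        rw [Finset.Icc_eq_empty (show ¬ (2:ℕ) ≤ 0 by omega),
            Finset.Icc_eq_empty (show ¬ k-0+2 ≤ k by omega), Finset.sum_empty]
    | (j0+1) =>
        exact (trans1 hmono hsym hnk hr1 j0 (by omega)).mpr (hP j0 (by omega))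
  · rintro ⟨hr1, hP⟩
    refine ⟨hr1, ?_⟩
    intro j0 hj0
    exact (trans1 hmono hsym hnk hr1 j0 hj0).mp (hP (j0+1) (by omega))
end
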